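/- Let p be a prime and q ∈ F_p(x) a rational function such that: (i) q(x−1) = q(x) (i.e., q is invariant under the substitution x ↦ x−1); (ii) q admits a representation q = A/B with polynomials A, B ∈ F_p[x], deg A < deg B, and B a product of linear factors x − n with n ∈ F_p (equivalently, B divides a power of x^p − x); and (iii) q has no pole at x = 0. Then q = 0. -/

import Mathlib

/-- Let `p` be a prime and `q ∈ 𝔽_p(x)` a rational function such that:
(i) `q(x-1) = q(x)`, i.e. `q` is invariant under the substitution `x ↦ x - 1`;
(ii) `q = A/B` with polynomials `A, B ∈ 𝔽_p[x]`, `deg A < deg B`, and `B` dividing a power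
of `x^p - x` (equivalently, `B` a product of linear factors `x - n` with `n ∈ 𝔽_p`);
(iii) `q` has no pole at `x = 0`, i.e. `q = C/D` with `D(0) ≠ 0`.
Then `q = 0`. -/
theorem shift_invariant_ratfunc_eq_zero (p : ℕ) [Fact p.Prime] (q : RatFunc (ZMod p))
    (hshift : RatFunc.eval (algebraMap (ZMod p) (RatFunc (ZMod p))) (RatFunc.X - 1) q = q)
    (hrep : ∃ A B : Polynomial (ZMod p),
      q = algebraMap (Polynomial (ZMod p)) (RatFunc (ZMod p)) A /
            algebraMap (Polynomial (ZMod p)) (RatFunc (ZMod p)) B ∧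
      A.degree < B.degree ∧
      ∃ m : ℕ, B ∣ (Polynomial.X ^ p - Polynomial.X) ^ m)
    (hnopole : ∃ C D : Polynomial (ZMod p), D.eval 0 ≠ 0 ∧
      q = algebraMap (Polynomial (ZMod p)) (RatFunc (ZMod p)) C /
            algebraMap (Polynomial (ZMod p)) (RatFunc (ZMod p)) D) :
    q = 0 := by
  classical
  set K := ZMod p with hK
  by_contra hq
  obtain ⟨A, B, hAB, hdeg, m, hBdvd⟩ := hrep
  obtain ⟨C, D, hD0, hCD⟩ := hnopole
  have hB : B ≠ 0 := by
    intro h; rw [h, Polynomial.degree_zero] at hdeg; exact (not_lt_bot hdeg)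
  have hD : D ≠ 0 := fun h => hD0 (by simp [h])
  have hA : A ≠ 0 := by
    intro h; apply hq; rw [hAB, h, map_zero, zero_div]
  have hnum : q.num ≠ 0 := RatFunc.num_ne_zero hq
  have hden : q.denom ≠ 0 := RatFunc.denom_ne_zero q
  have hdvdB : q.denom ∣ B := (RatFunc.denom_dvd hB).mpr ⟨A, hAB⟩
  have hdvdD : q.denom ∣ D := (RatFunc.denom_dvd hD).mpr ⟨C, hCD⟩
  have hden0 : q.denom.eval 0 ≠ 0 := fun h =>
    hD0 (Polynomial.eval_eq_zero_of_dvd_of_eval_eq_zero hdvdD h)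
  have hinj := RatFunc.algebraMap_injective K
  -- degree of num < degree of denom
  have hcross : q.num * B = A * q.denom := by
    have h1 : algebraMap (Polynomial K) (RatFunc K) q.num /
        algebraMap (Polynomial K) (RatFunc K) q.denom =
        algebraMap (Polynomial K) (RatFunc K) A / algebraMap (Polynomial K) (RatFunc K) B := by
      rw [RatFunc.num_div_denom, hAB]
    rw [div_eq_div_iff (RatFunc.algebraMap_ne_zero hden) (RatFunc.algebraMap_ne_zero hB)] at h1
    apply hinj
    rw [map_mul, map_mul]; exact h1
  have hdegnum : q.num.natDegree < q.denom.natDegree := by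
    have h1 : q.num.natDegree + B.natDegree = q.denom.natDegree + A.natDegree := by
      rw [← Polynomial.natDegree_mul hnum hB, add_comm q.denom.natDegree,
        ← Polynomial.natDegree_mul hA hden, hcross]
    have h2 : A.natDegree < B.natDegree := Polynomial.natDegree_lt_natDegree hA hdeg
    omega
  -- the shift invariance gives denom.comp (X - 1) = denom
  have key : ∀ P : Polynomial K, Polynomial.eval₂ (algebraMap K (RatFunc K)) (RatFunc.X - 1) P
      = algebraMap (Polynomial K) (RatFunc K) (P.comp (Polynomial.X - 1)) := by
    intro P
    have h0 : algebraMap (Polynomial K) (RatFunc K) (Polynomial.X - 1) = RatFunc.X - 1 := by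
      rw [map_sub, RatFunc.algebraMap_X, map_one]
    have := Polynomial.aeval_algHom_apply (IsScalarTower.toAlgHom K (Polynomial K) (RatFunc K))
      (Polynomial.X - 1) P
    rw [IsScalarTower.coe_toAlgHom', h0] at this
    rw [Polynomial.comp_eq_aeval, ← this, Polynomial.aeval_def]
  have hshift2 : algebraMap (Polynomial K) (RatFunc K) (q.num.comp (Polynomial.X - 1)) /
      algebraMap (Polynomial K) (RatFunc K) (q.denom.comp (Polynomial.X - 1)) = q := by
    rw [← key, ← key]; exact hshift
  have hDcomp_ne : q.denom.comp (Polynomial.X - 1) ≠ 0 := by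
    have : (q.denom.comp (Polynomial.X - 1)).Monic := by
      have := (RatFunc.monic_denom q).comp_X_sub_C 1
      rwa [Polynomial.C_1] at this
    exact this.ne_zero
  have hcross2 : q.num.comp (Polynomial.X - 1) * q.denom =
      q.num * q.denom.comp (Polynomial.X - 1) := by
    have h1 : algebraMap (Polynomial K) (RatFunc K) (q.num.comp (Polynomial.X - 1)) /
        algebraMap (Polynomial K) (RatFunc K) (q.denom.comp (Polynomial.X - 1)) =
        algebraMap (Polynomial K) (RatFunc K) q.num /
        algebraMap (Polynomial K) (RatFunc K) q.denom := by
      rw [hshift2, RatFunc.num_div_denom]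
    rw [div_eq_div_iff (RatFunc.algebraMap_ne_zero hDcomp_ne)
      (RatFunc.algebraMap_ne_zero hden)] at h1
    apply hinj
    rw [map_mul, map_mul]; exact h1
  have hdvdcomp : q.denom ∣ q.denom.comp (Polynomial.X - 1) := by
    have hd : q.denom ∣ q.num * q.denom.comp (Polynomial.X - 1) := by
      rw [← hcross2]; exact Dvd.intro_left _ rfl
    exact ((RatFunc.isCoprime_num_denom q).symm).dvd_of_dvd_mul_left hd
  have hDenEq : q.denom.comp (Polynomial.X - 1) = q.denom := by
    obtain ⟨c, hc⟩ := hdvdcomp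
    have hdegc : (q.denom.comp (Polynomial.X - 1)).natDegree = q.denom.natDegree := by
      rw [Polynomial.natDegree_comp]
      have : (Polynomial.X - 1 : Polynomial K).natDegree = 1 := by
        rw [← Polynomial.C_1]; exact Polynomial.natDegree_X_sub_C 1
      rw [this, mul_one]
    have hc0 : c ≠ 0 := by
      intro h; rw [h, mul_zero] at hc; exact hDcomp_ne hc
    have hcdeg : c.natDegree = 0 := by
      have := hdegc
      rw [hc, Polynomial.natDegree_mul hden hc0] at this
      omega
    have hmon : (q.denom.comp (Polynomial.X - 1)).Monic := by
      have := (RatFunc.monic_denom q).comp_X_sub_C 1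
      rwa [Polynomial.C_1] at this
    have hlc : c.leadingCoeff = 1 := by
      have := hmon
      rw [hc] at this
      have h2 := Polynomial.leadingCoeff_mul q.denom c
      rw [this.leadingCoeff, (RatFunc.monic_denom q).leadingCoeff, one_mul] at h2
      exact h2.symm
    have : c = 1 := by
      rw [Polynomial.eq_C_of_natDegree_eq_zero hcdeg]
      rw [Polynomial.eq_C_of_natDegree_eq_zero hcdeg] at hlc
      rw [Polynomial.leadingCoeff_C] at hlc
      rw [hlc, Polynomial.C_1]
    rw [hc, this, mul_one]
  -- so roots of denom are shift invariant
  have hshift_eval : ∀ c : K, q.denom.eval (c - 1) = q.denom.eval c := by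
    intro c
    conv_rhs => rw [← hDenEq]
    rw [Polynomial.eval_comp]
    simp
  -- denom has a root since it divides (X^p - X)^m and has positive degree
  have hdenpos : 1 ≤ q.denom.natDegree := by omega
  have hdvdpow : q.denom ∣ (Polynomial.X ^ p - Polynomial.X) ^ m := dvd_trans hdvdB hBdvd
  have hcard : Fintype.card K = p := ZMod.card p
  have hplt : 1 < p := (Fact.out : p.Prime).one_lt
  have hXne : (Polynomial.X ^ p - Polynomial.X : Polynomial K) ≠ 0 := by
    exact FiniteField.X_pow_card_sub_X_ne_zero K hplt
  have hsplitsX : ((Polynomial.X ^ p - Polynomial.X : Polynomial K)).Splits := by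
    rw [Polynomial.splits_iff_card_roots]
    have hroots : (Polynomial.X ^ p - Polynomial.X : Polynomial K).roots = Finset.univ.val := by
      have := FiniteField.roots_X_pow_card_sub_X K
      rwa [hcard] at this
    rw [hroots, FiniteField.X_pow_card_sub_X_natDegree_eq K hplt]
    simpa using hcard
  have hsplitsden : q.denom.Splits :=
    Polynomial.Splits.of_dvd (hsplitsX.pow m) (pow_ne_zero m hXne)
      hdvdpow
  have hdegne : q.denom.degree ≠ 0 := by
    rw [Polynomial.degree_eq_natDegree hden]
    intro h
    have : q.denom.natDegree = 0 := by exact_mod_cast h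
    omega
  obtain ⟨c, hc⟩ := Polynomial.Splits.exists_eval_eq_zero hsplitsden hdegne
  have hc' : q.denom.eval c = 0 := hc
  -- propagate the root down to 0
  have hdown : ∀ n : ℕ, q.denom.eval (c - n) = 0 := by
    intro n
    induction n with
    | zero => simpa using hc'
    | succ k ih =>
      have : ((k + 1 : ℕ) : K) = (k : K) + 1 := by push_cast; ring
      rw [this, ← sub_sub, hshift_eval, ih]
  have h0 : q.denom.eval 0 = 0 := by
    have := hdown c.val
    rwa [ZMod.natCast_val, ZMod.cast_id, sub_self] at this
  exact hden0 h0
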